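/- arXiv:1209.1144 — 3 statements merged into one kernel-verified Lean document; each statement's English description precedes it below -/
import Mathlib

section
/- (Stability of viscosity solutions) Let Ω ⊆ ℝⁿ be open and 0 < λ ≤ Λ. Let u_k, g_k : Ω → ℝ be sequences of continuous functions such that each u_k is a viscosity solution (respectively subsolution, respectively supersolution) of M⁺_{λ,Λ}(D²u_k) + g_k = 0 in Ω. If u_k → u and g_k → g uniformly on every compact subset of Ω, then u is a viscosity solution (respectively subsolution, respectively supersolution) of M⁺_{λ,Λ}(D²u) + g = 0 in Ω. -/
open scoped BigOperators

/-- The Pucci maximal operator `M⁺_{λ,Λ}`: for a symmetric matrix it equals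
`Λ · (sum of positive eigenvalues) + λ · (sum of negative eigenvalues)`. -/
noncomputable def pucciMax (lam Lam : ℝ) {n : ℕ} (M : Matrix (Fin n) (Fin n) ℝ) : ℝ :=
  if h : M.IsHermitian then
    ∑ i, (Lam * max (h.eigenvalues i) 0 + lam * min (h.eigenvalues i) 0)
  else 0

/-- The Hessian matrix of `φ` at `x`. -/
noncomputable def hess {n : ℕ} (φ : EuclideanSpace ℝ (Fin n) → ℝ)
    (x : EuclideanSpace ℝ (Fin n)) : Matrix (Fin n) (Fin n) ℝ :=
  fun i j => iteratedFDeriv ℝ 2 φ x ![EuclideanSpace.single i 1, EuclideanSpace.single j 1]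

/-- `u` is a viscosity supersolution of `M⁺_{λ,Λ}(D²u) + g = 0` in `Ω`. -/
def PucciSupersol (lam Lam : ℝ) {n : ℕ} (Ω : Set (EuclideanSpace ℝ (Fin n)))
    (u g : EuclideanSpace ℝ (Fin n) → ℝ) : Prop :=
  ∀ x₀ ∈ Ω, ∀ φ : EuclideanSpace ℝ (Fin n) → ℝ, ContDiff ℝ 2 φ →
    IsLocalMin (fun x => u x - φ x) x₀ → pucciMax lam Lam (hess φ x₀) + g x₀ ≤ 0

/-- `u` is a viscosity subsolution of `M⁺_{λ,Λ}(D²u) + g = 0` in `Ω`. -/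
def PucciSubsol (lam Lam : ℝ) {n : ℕ} (Ω : Set (EuclideanSpace ℝ (Fin n)))
    (u g : EuclideanSpace ℝ (Fin n) → ℝ) : Prop :=
  ∀ x₀ ∈ Ω, ∀ φ : EuclideanSpace ℝ (Fin n) → ℝ, ContDiff ℝ 2 φ →
    IsLocalMax (fun x => u x - φ x) x₀ → 0 ≤ pucciMax lam Lam (hess φ x₀) + g x₀

section Aux

open Matrix Finset

variable {n : ℕ}

/-- admissible matrices -/
def Adm (lam Lam : ℝ) {n : ℕ} (A : Matrix (Fin n) (Fin n) ℝ) : Prop :=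
  ∃ (W : Matrix.unitaryGroup (Fin n) ℝ) (a : Fin n → ℝ),
    (∀ i, a i ∈ Set.Icc lam Lam) ∧ A = W * Matrix.diagonal a * star (W : Matrix (Fin n) (Fin n) ℝ)

noncomputable def fro {n : ℕ} (M : Matrix (Fin n) (Fin n) ℝ) : ℝ :=
  Real.sqrt (∑ i, ∑ j, (M i j)^2)

lemma trace_repr {N : Matrix (Fin n) (Fin n) ℝ} (hN : N.IsHermitian)
    (A : Matrix (Fin n) (Fin n) ℝ) :
    (A * N).trace = ∑ i, (star (hN.eigenvectorUnitary : Matrix (Fin n) (Fin n) ℝ) * A *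
      (hN.eigenvectorUnitary : Matrix (Fin n) (Fin n) ℝ)) i i * hN.eigenvalues i := by
  set V := (hN.eigenvectorUnitary : Matrix (Fin n) (Fin n) ℝ)
  have h1 : N = V * Matrix.diagonal (RCLike.ofReal ∘ hN.eigenvalues) * star V :=
    hN.spectral_theorem
  calc (A * N).trace = (A * (V * Matrix.diagonal (RCLike.ofReal ∘ hN.eigenvalues) * star V)).trace := by rw [← h1]
    _ = ((star V * A * V) * Matrix.diagonal (RCLike.ofReal ∘ hN.eigenvalues)).trace := by
        rw [← Matrix.mul_assoc, ← Matrix.mul_assoc, Matrix.trace_mul_cycle, ← Matrix.mul_assoc]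
    _ = ∑ i, (star V * A * V) i i * hN.eigenvalues i := by
        rw [Matrix.trace]
        congr 1; ext i
        simp [Matrix.mul_apply, Matrix.diagonal, Matrix.diag]

lemma unit_col_sq (P : Matrix.unitaryGroup (Fin n) ℝ) (i : Fin n) :
    ∑ k, (P : Matrix (Fin n) (Fin n) ℝ) k i ^ 2 = 1 := by
  have h : (star (P : Matrix (Fin n) (Fin n) ℝ) * P) i i = 1 := by
    rw [(Matrix.mem_unitaryGroup_iff').mp P.2]
    simp
  rw [Matrix.mul_apply] at h
  simpa [Matrix.star_apply, sq] using h

lemma conj_diag_entry (P : Matrix.unitaryGroup (Fin n) ℝ) (a : Fin n → ℝ) (i : Fin n) :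
    (star (P : Matrix (Fin n) (Fin n) ℝ) * Matrix.diagonal a * P) i i
      = ∑ k, a k * (P : Matrix (Fin n) (Fin n) ℝ) k i ^ 2 := by
  rw [Matrix.mul_apply]
  congr 1; ext k
  rw [Matrix.mul_apply]
  simp [Matrix.diagonal, Matrix.star_apply, Finset.mul_sum, sq]
  ring

lemma diag_entry_bound {lam Lam : ℝ} {A : Matrix (Fin n) (Fin n) ℝ} (hA : Adm lam Lam A)
    (V : Matrix.unitaryGroup (Fin n) ℝ) (i : Fin n) :
    (star (V : Matrix (Fin n) (Fin n) ℝ) * A * V) i i ∈ Set.Icc lam Lam := by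
  obtain ⟨W, a, ha, hAeq⟩ := hA
  set P : Matrix.unitaryGroup (Fin n) ℝ := (star W) * V with hP
  have hPc : (P : Matrix (Fin n) (Fin n) ℝ) = star (W : Matrix (Fin n) (Fin n) ℝ) * V := rfl
  have key : (star (V : Matrix (Fin n) (Fin n) ℝ) * A * V) i i
      = (star (P : Matrix (Fin n) (Fin n) ℝ) * Matrix.diagonal a * P) i i := by
    rw [hAeq, hPc]
    simp only [Matrix.star_mul, star_star, Matrix.mul_assoc]
  rw [key, conj_diag_entry]
  have hsum := unit_col_sq P i
  constructor
  · calc lam = ∑ k, lam * (P : Matrix (Fin n) (Fin n) ℝ) k i ^ 2 := by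
          rw [← Finset.mul_sum, hsum, mul_one]
      _ ≤ _ := Finset.sum_le_sum fun k _ =>
          mul_le_mul_of_nonneg_right (ha k).1 (sq_nonneg _)
  · calc ∑ k, a k * (P : Matrix (Fin n) (Fin n) ℝ) k i ^ 2
        ≤ ∑ k, Lam * (P : Matrix (Fin n) (Fin n) ℝ) k i ^ 2 := Finset.sum_le_sum fun k _ =>
          mul_le_mul_of_nonneg_right (ha k).2 (sq_nonneg _)
      _ = Lam := by rw [← Finset.mul_sum, hsum, mul_one]

lemma trace_le_pucci {lam Lam : ℝ} (hL : lam ≤ Lam)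
    {A N : Matrix (Fin n) (Fin n) ℝ} (hA : Adm lam Lam A) (hN : N.IsHermitian) :
    (A * N).trace ≤ pucciMax lam Lam N := by
  rw [pucciMax, dif_pos hN, trace_repr hN A]
  apply Finset.sum_le_sum
  intro i _
  have hb := diag_entry_bound hA hN.eigenvectorUnitary i
  set c := (star (hN.eigenvectorUnitary : Matrix (Fin n) (Fin n) ℝ) * A *
      (hN.eigenvectorUnitary : Matrix (Fin n) (Fin n) ℝ)) i i
  set e := hN.eigenvalues i
  rcases le_or_gt 0 e with he | he
  · have : max e 0 = e := max_eq_left he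
    have h2 : min e 0 = 0 := min_eq_right he
    rw [this, h2, mul_zero, add_zero]
    exact mul_le_mul_of_nonneg_right hb.2 he
  · have : max e 0 = 0 := max_eq_right he.le
    have h2 : min e 0 = e := min_eq_left he.le
    rw [this, h2, mul_zero, zero_add]
    calc c * e ≤ lam * e := by nlinarith [hb.1]
      _ = lam * e := rfl

lemma trace_le_eigsum {lam Lam : ℝ} (hl : 0 < lam) (hL : lam ≤ Lam)
    {A D : Matrix (Fin n) (Fin n) ℝ} (hA : Adm lam Lam A) (hD : D.IsHermitian) :
    (A * D).trace ≤ Lam * ∑ i, |hD.eigenvalues i| := by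
  rw [trace_repr hD A, Finset.mul_sum]
  apply Finset.sum_le_sum
  intro i _
  have hb := diag_entry_bound hA hD.eigenvectorUnitary i
  calc (star (hD.eigenvectorUnitary : Matrix (Fin n) (Fin n) ℝ) * A *
      (hD.eigenvectorUnitary : Matrix (Fin n) (Fin n) ℝ)) i i * hD.eigenvalues i
      ≤ |(star (hD.eigenvectorUnitary : Matrix (Fin n) (Fin n) ℝ) * A *
      (hD.eigenvectorUnitary : Matrix (Fin n) (Fin n) ℝ)) i i| * |hD.eigenvalues i| := by
        rw [← abs_mul]; exact le_abs_self _
    _ ≤ Lam * |hD.eigenvalues i| := by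
        apply mul_le_mul_of_nonneg_right _ (abs_nonneg _)
        rw [abs_of_pos (lt_of_lt_of_le hl hb.1)]
        exact hb.2

lemma pucci_attained {lam Lam : ℝ} (hL : lam ≤ Lam) {M : Matrix (Fin n) (Fin n) ℝ}
    (hM : M.IsHermitian) :
    ∃ A : Matrix (Fin n) (Fin n) ℝ, Adm lam Lam A ∧ (A * M).trace = pucciMax lam Lam M := by
  classical
  set a : Fin n → ℝ := fun i => if 0 ≤ hM.eigenvalues i then Lam else lam with ha_def
  set V := (hM.eigenvectorUnitary : Matrix (Fin n) (Fin n) ℝ)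
  refine ⟨V * Matrix.diagonal a * star V, ⟨hM.eigenvectorUnitary, a, fun i => ?_, rfl⟩, ?_⟩
  · by_cases h : 0 ≤ hM.eigenvalues i <;> simp [ha_def, h, hL, le_refl, Set.mem_Icc]
  · rw [trace_repr hM]
    have key : ∀ i, (star V * (V * Matrix.diagonal a * star V) * V) i i = a i := by
      intro i
      have h1 : star V * V = 1 := (Matrix.mem_unitaryGroup_iff').mp hM.eigenvectorUnitary.2
      have : star V * (V * Matrix.diagonal a * star V) * V = Matrix.diagonal a := by
        rw [← Matrix.mul_assoc, ← Matrix.mul_assoc, h1, Matrix.one_mul, Matrix.mul_assoc, h1,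
          Matrix.mul_one]
      rw [this]; simp [Matrix.diagonal]
    rw [pucciMax, dif_pos hM]
    congr 1; ext i
    rw [key i]
    rcases le_or_gt 0 (hM.eigenvalues i) with he | he
    · rw [ha_def]; simp only [if_pos he]
      rw [max_eq_left he, min_eq_right he, mul_zero, add_zero]
    · rw [ha_def]; simp only [if_neg (not_le.mpr he)]
      rw [max_eq_right he.le, min_eq_left he.le, mul_zero, zero_add]

lemma eig_le_fro {D : Matrix (Fin n) (Fin n) ℝ} (hD : D.IsHermitian) (i : Fin n) :
    |hD.eigenvalues i| ≤ fro D := by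
  have htr : (D * D).trace = ∑ j, hD.eigenvalues j ^ 2 := by
    rw [trace_repr hD D]
    have h1 : star (hD.eigenvectorUnitary : Matrix (Fin n) (Fin n) ℝ) * D *
        (hD.eigenvectorUnitary : Matrix (Fin n) (Fin n) ℝ)
        = Matrix.diagonal (RCLike.ofReal ∘ hD.eigenvalues) := by
        simpa using hD.conjStarAlgAut_star_eigenvectorUnitary
    rw [h1]
    congr 1; ext j
    simp [Matrix.diagonal, sq]
  have htr2 : (D * D).trace = ∑ p : Fin n, ∑ q : Fin n, (D p q) ^ 2 := by
    rw [Matrix.trace]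
    congr 1; ext p
    rw [Matrix.diag, Matrix.mul_apply]
    congr 1; ext q
    have := congrFun (congrFun hD.symm q) p
    simp only [Matrix.conjTranspose_apply, star_trivial] at this
    rw [sq, ← this]
  have hle : hD.eigenvalues i ^ 2 ≤ ∑ p : Fin n, ∑ q : Fin n, (D p q) ^ 2 := by
    rw [← htr2, htr]
    exact Finset.single_le_sum (f := fun j => hD.eigenvalues j ^ 2) (fun j _ => sq_nonneg _) (Finset.mem_univ i)
  calc |hD.eigenvalues i| = Real.sqrt (hD.eigenvalues i ^ 2) := (Real.sqrt_sq_eq_abs _).symm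
    _ ≤ fro D := Real.sqrt_le_sqrt hle

lemma fro_nonneg (D : Matrix (Fin n) (Fin n) ℝ) : 0 ≤ fro D := Real.sqrt_nonneg _

lemma pucci_lip {lam Lam : ℝ} (hl : 0 < lam) (hL : lam ≤ Lam)
    {M N : Matrix (Fin n) (Fin n) ℝ} (hM : M.IsHermitian) (hN : N.IsHermitian) :
    pucciMax lam Lam M ≤ pucciMax lam Lam N + Lam * n * fro (M - N) := by
  obtain ⟨A, hA, hAM⟩ := pucci_attained hL hM
  have hD : (M - N).IsHermitian := hM.sub hN
  have split : (A * M).trace = (A * N).trace + (A * (M - N)).trace := by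
    rw [Matrix.mul_sub, Matrix.trace_sub]; ring
  have h1 : (A * N).trace ≤ pucciMax lam Lam N := trace_le_pucci hL hA hN
  have h2 : (A * (M - N)).trace ≤ Lam * ∑ i, |hD.eigenvalues i| := trace_le_eigsum hl hL hA hD
  have h3 : ∑ i, |hD.eigenvalues i| ≤ n * fro (M - N) := by
    calc ∑ i, |hD.eigenvalues i| ≤ ∑ _i : Fin n, fro (M - N) :=
          Finset.sum_le_sum fun i _ => eig_le_fro hD i
      _ = n * fro (M - N) := by simp [Finset.sum_const]
  have hLam0 : 0 ≤ Lam := le_of_lt (lt_of_lt_of_le hl hL)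
  nlinarith [hAM, h1, h2, h3]

section Hess
open scoped InnerProductSpace
variable {n : ℕ}

lemma hess_apply (φ : EuclideanSpace ℝ (Fin n) → ℝ) (x : EuclideanSpace ℝ (Fin n)) (i j : Fin n) :
    hess φ x i j
      = fderiv ℝ (fderiv ℝ φ) x (EuclideanSpace.single i 1) (EuclideanSpace.single j 1) := by
  rw [hess, iteratedFDeriv_two_apply]
  simp

lemma hess_isHermitian {φ : EuclideanSpace ℝ (Fin n) → ℝ} (hφ : ContDiff ℝ 2 φ)
    (x : EuclideanSpace ℝ (Fin n)) : (hess φ x).IsHermitian := by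
  have hs : IsSymmSndFDerivAt ℝ φ x := (hφ.contDiffAt).isSymmSndFDerivAt (by simp)
  show (hess φ x).conjTranspose = hess φ x
  ext i j
  rw [Matrix.conjTranspose_apply, hess_apply, hess_apply, star_trivial, hs.eq]

lemma hess_continuous {φ : EuclideanSpace ℝ (Fin n) → ℝ} (hφ : ContDiff ℝ 2 φ) (i j : Fin n) :
    Continuous (fun x => hess φ x i j) := by
  exact (ContinuousMultilinearMap.apply ℝ _ ℝ
    ![EuclideanSpace.single i 1, EuclideanSpace.single j 1]).continuous.comp
    (hφ.continuous_iteratedFDeriv (le_refl 2))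

lemma q_contDiff (x₀ : EuclideanSpace ℝ (Fin n)) :
    ContDiff ℝ 2 (fun x : EuclideanSpace ℝ (Fin n) => ⟪x - x₀, x - x₀⟫_ℝ) :=
  ContDiff.inner ℝ (contDiff_id.sub contDiff_const) (contDiff_id.sub contDiff_const)

lemma q_fderiv (x₀ y : EuclideanSpace ℝ (Fin n)) :
    HasFDerivAt (fun x : EuclideanSpace ℝ (Fin n) => ⟪x - x₀, x - x₀⟫_ℝ)
      ((2:ℝ) • (innerSL ℝ (y - x₀))) y := by
  have h : HasFDerivAt (fun x : EuclideanSpace ℝ (Fin n) => x - x₀)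
      (ContinuousLinearMap.id ℝ (EuclideanSpace ℝ (Fin n))) y := (hasFDerivAt_id y).sub_const x₀
  have h2 := h.inner ℝ h
  refine h2.congr_fderiv ?_
  ext v
  simp [fderivInnerCLM_apply, innerSL_apply_apply, real_inner_comm, two_smul]
  rw [real_inner_comm, inner_sub_left]

lemma q_hess (x₀ x : EuclideanSpace ℝ (Fin n)) (i j : Fin n) :
    hess (fun x : EuclideanSpace ℝ (Fin n) => ⟪x - x₀, x - x₀⟫_ℝ) x i j
      = if i = j then 2 else 0 := by
  set q : EuclideanSpace ℝ (Fin n) → ℝ := fun x => ⟪x - x₀, x - x₀⟫_ℝ with hq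
  set F : EuclideanSpace ℝ (Fin n) → (EuclideanSpace ℝ (Fin n) →L[ℝ] ℝ) := fderiv ℝ q with hF
  have hFdiff : DifferentiableAt ℝ F x := by
    have : ContDiff ℝ 1 F := (q_contDiff x₀).fderiv_right (le_refl 2)
    exact (this.differentiable (by norm_num)).differentiableAt
  have hG : HasFDerivAt (fun y => F y (EuclideanSpace.single j (1:ℝ)))
      ((2:ℝ) • (innerSL ℝ (EuclideanSpace.single j (1:ℝ)))) x := by
    have hFy : F = fun y => (2:ℝ) • (innerSL ℝ (y - x₀)) := funext fun y => (q_fderiv x₀ y).fderiv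
    rw [hFy]
    have h1 : HasFDerivAt (fun y : EuclideanSpace ℝ (Fin n) =>
        ⟪y - x₀, EuclideanSpace.single j (1:ℝ)⟫_ℝ)
        (innerSL ℝ (EuclideanSpace.single j (1:ℝ))) x := by
      have h : HasFDerivAt (fun x : EuclideanSpace ℝ (Fin n) => x - x₀)
          (ContinuousLinearMap.id ℝ (EuclideanSpace ℝ (Fin n))) x := (hasFDerivAt_id x).sub_const x₀
      have h2 := h.inner ℝ (hasFDerivAt_const (EuclideanSpace.single j (1:ℝ)) x)
      refine h2.congr_fderiv ?_
      ext v
      simp [fderivInnerCLM_apply, innerSL_apply_apply]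
      exact real_inner_comm _ _
    have h3 := h1.const_smul (2:ℝ)
    exact h3.congr_of_eventuallyEq (Filter.Eventually.of_forall fun y => by
      simp [innerSL_apply_apply, inner_sub_left])
  have key : fderiv ℝ F x (EuclideanSpace.single i (1:ℝ)) (EuclideanSpace.single j (1:ℝ))
      = fderiv ℝ (fun y => F y (EuclideanSpace.single j (1:ℝ))) x
        (EuclideanSpace.single i (1:ℝ)) := by
    rw [fderiv_clm_apply hFdiff (differentiableAt_const _)]
    simp
  have h0 : hess q x i j = fderiv ℝ F x (EuclideanSpace.single i (1:ℝ))
      (EuclideanSpace.single j (1:ℝ)) := hess_apply q x i j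
  rw [h0, key, hG.fderiv]
  simp only [ContinuousLinearMap.smul_apply, innerSL_apply_apply, smul_eq_mul]
  rw [real_inner_comm]
  simp [EuclideanSpace.inner_single_left, EuclideanSpace.single_apply]

lemma psi_contDiff {φ : EuclideanSpace ℝ (Fin n) → ℝ} (hφ : ContDiff ℝ 2 φ) (ε : ℝ)
    (x₀ : EuclideanSpace ℝ (Fin n)) :
    ContDiff ℝ 2 (fun x => φ x + ε * ⟪x - x₀, x - x₀⟫_ℝ) :=
  hφ.add (contDiff_const.mul (q_contDiff x₀))

lemma hess_psi {φ : EuclideanSpace ℝ (Fin n) → ℝ} (hφ : ContDiff ℝ 2 φ) (ε : ℝ)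
    (x₀ x : EuclideanSpace ℝ (Fin n)) :
    hess (fun x => φ x + ε * ⟪x - x₀, x - x₀⟫_ℝ) x
      = hess φ x + (2 * ε) • (1 : Matrix (Fin n) (Fin n) ℝ) := by
  ext i j
  have hq2 : ContDiff ℝ 2 (fun x : EuclideanSpace ℝ (Fin n) =>
      ε * ⟪x - x₀, x - x₀⟫_ℝ) := contDiff_const.mul (q_contDiff x₀)
  have h1 : hess (fun x => φ x + ε * ⟪x - x₀, x - x₀⟫_ℝ) x i j
      = hess φ x i j + iteratedFDeriv ℝ 2 (fun x : EuclideanSpace ℝ (Fin n) =>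
          ε * ⟪x - x₀, x - x₀⟫_ℝ) x
          ![EuclideanSpace.single i 1, EuclideanSpace.single j 1] := by
    show iteratedFDeriv ℝ 2 (fun x => φ x + ε * ⟪x - x₀, x - x₀⟫_ℝ) x _ = _
    rw [iteratedFDeriv_add_apply' hφ.contDiffAt hq2.contDiffAt]
    rfl
  have h2 : iteratedFDeriv ℝ 2 (fun x : EuclideanSpace ℝ (Fin n) =>
      ε * ⟪x - x₀, x - x₀⟫_ℝ) x ![EuclideanSpace.single i 1, EuclideanSpace.single j 1]
      = ε * (if i = j then 2 else 0) := by
    have h3 : (fun x : EuclideanSpace ℝ (Fin n) => ε * ⟪x - x₀, x - x₀⟫_ℝ)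
        = ε • (fun x : EuclideanSpace ℝ (Fin n) => ⟪x - x₀, x - x₀⟫_ℝ) := rfl
    rw [h3, iteratedFDeriv_const_smul_apply (q_contDiff x₀).contDiffAt]
    have := q_hess x₀ x i j
    rw [hess] at this
    simp only [ContinuousMultilinearMap.smul_apply, smul_eq_mul, this]
  rw [h1, h2]
  simp [Matrix.one_apply]
  by_cases h : i = j <;> simp [h] <;> ring

end Hess

open Filter in
lemma fro_tendsto_zero {n : ℕ} {ψ : EuclideanSpace ℝ (Fin n) → ℝ} (hψ : ContDiff ℝ 2 ψ)
    {x : ℕ → EuclideanSpace ℝ (Fin n)} {x₀ : EuclideanSpace ℝ (Fin n)}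
    (hx : Tendsto x atTop (nhds x₀)) :
    Tendsto (fun k => fro (hess ψ (x k) - hess ψ x₀)) atTop (nhds 0) := by
  have hent : ∀ i j, Tendsto (fun k => (hess ψ (x k) i j - hess ψ x₀ i j)^2) atTop (nhds 0) := by
    intro i j
    have h1 : Tendsto (fun k => hess ψ (x k) i j) atTop (nhds (hess ψ x₀ i j)) :=
      ((hess_continuous hψ i j).continuousAt).tendsto.comp hx
    have h2 : Tendsto (fun k => hess ψ (x k) i j - hess ψ x₀ i j) atTop (nhds 0) := by
      have := h1.sub tendsto_const_nhds (g := fun _ => hess ψ x₀ i j)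
      simpa using this
    have := h2.mul h2
    simpa [sq] using this
  have hsum : Tendsto (fun k => ∑ i, ∑ j, (hess ψ (x k) i j - hess ψ x₀ i j)^2)
      atTop (nhds 0) := by
    have := tendsto_finset_sum (Finset.univ : Finset (Fin n))
      (fun i _ => tendsto_finset_sum (Finset.univ : Finset (Fin n)) (fun j _ => hent i j))
    simpa using this
  have := hsum.sqrt
  simpa [fro, Matrix.sub_apply] using this

open Filter in
lemma pucci_hess_tendsto {n : ℕ} {lam Lam : ℝ} (hl : 0 < lam) (hL : lam ≤ Lam)
    {ψ : EuclideanSpace ℝ (Fin n) → ℝ} (hψ : ContDiff ℝ 2 ψ)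
    {x : ℕ → EuclideanSpace ℝ (Fin n)} {x₀ : EuclideanSpace ℝ (Fin n)}
    (hx : Tendsto x atTop (nhds x₀)) :
    Tendsto (fun k => pucciMax lam Lam (hess ψ (x k))) atTop
      (nhds (pucciMax lam Lam (hess ψ x₀))) := by
  have hfro := fro_tendsto_zero hψ hx
  have hub : ∀ k, pucciMax lam Lam (hess ψ (x k))
      ≤ pucciMax lam Lam (hess ψ x₀) + Lam * n * fro (hess ψ (x k) - hess ψ x₀) :=
    fun k => pucci_lip hl hL (hess_isHermitian hψ _) (hess_isHermitian hψ _)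
  have hlb : ∀ k, pucciMax lam Lam (hess ψ x₀)
      - Lam * n * fro (hess ψ (x k) - hess ψ x₀) ≤ pucciMax lam Lam (hess ψ (x k)) := by
    intro k
    have h1 : pucciMax lam Lam (hess ψ x₀) ≤ pucciMax lam Lam (hess ψ (x k))
        + Lam * n * fro (hess ψ x₀ - hess ψ (x k)) :=
      pucci_lip hl hL (hess_isHermitian hψ _) (hess_isHermitian hψ _)
    have h2 : fro (hess ψ x₀ - hess ψ (x k)) = fro (hess ψ (x k) - hess ψ x₀) := by
      unfold fro
      congr 1
      apply Finset.sum_congr rfl; intro i _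
      apply Finset.sum_congr rfl; intro j _
      simp [Matrix.sub_apply]; ring
    rw [h2] at h1; linarith
  have hu : Tendsto (fun k => pucciMax lam Lam (hess ψ x₀)
      + Lam * n * fro (hess ψ (x k) - hess ψ x₀)) atTop
      (nhds (pucciMax lam Lam (hess ψ x₀))) := by
    have := (tendsto_const_nhds (x := pucciMax lam Lam (hess ψ x₀)) (f := (atTop : Filter ℕ))).add
      ((tendsto_const_nhds (x := Lam * (n:ℝ)) (f := (atTop : Filter ℕ))).mul hfro)
    simpa using this
  have hlo : Tendsto (fun k => pucciMax lam Lam (hess ψ x₀)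
      - Lam * n * fro (hess ψ (x k) - hess ψ x₀)) atTop
      (nhds (pucciMax lam Lam (hess ψ x₀))) := by
    have := (tendsto_const_nhds (x := pucciMax lam Lam (hess ψ x₀)) (f := (atTop : Filter ℕ))).sub
      ((tendsto_const_nhds (x := Lam * (n:ℝ)) (f := (atTop : Filter ℕ))).mul hfro)
    simpa using this
  exact tendsto_of_tendsto_of_tendsto_of_le_of_le hlo hu hlb hub

lemma herm_smul_one {n : ℕ} (c : ℝ) : (c • (1 : Matrix (Fin n) (Fin n) ℝ)).IsHermitian := by
  show _ᴴ = _
  ext i j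
  by_cases h : i = j <;>
    simp [Matrix.conjTranspose_apply, Matrix.one_apply, h, eq_comm]

lemma fro_smul_one {n : ℕ} (c : ℝ) (hc : 0 ≤ c) :
    fro (c • (1 : Matrix (Fin n) (Fin n) ℝ)) = c * Real.sqrt n := by
  unfold fro
  have hrow : ∀ i : Fin n, ∑ j, ((c • (1 : Matrix (Fin n) (Fin n) ℝ)) i j)^2 = c^2 := by
    intro i
    rw [Finset.sum_eq_single i]
    · simp [Matrix.one_apply]
    · intro b _ hb
      simp only [Matrix.smul_apply, Matrix.one_apply, smul_eq_mul]
      rw [if_neg (fun h => hb h.symm)]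
      ring
    · simp
  rw [Finset.sum_congr rfl (fun i _ => hrow i)]
  simp only [Finset.sum_const, Finset.card_univ, Fintype.card_fin, nsmul_eq_mul]
  rw [Real.sqrt_mul (Nat.cast_nonneg n), Real.sqrt_sq hc, mul_comm]

open scoped InnerProductSpace

open Filter in
lemma sub_stable {n : ℕ} {lam Lam : ℝ} (hl : 0 < lam) (hL : lam ≤ Lam)
    {Ω : Set (EuclideanSpace ℝ (Fin n))} (hΩ : IsOpen Ω)
    {uk gk : ℕ → EuclideanSpace ℝ (Fin n) → ℝ}
    (huk : ∀ k, ContinuousOn (uk k) Ω) (hgk : ∀ k, ContinuousOn (gk k) Ω)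
    {u g : EuclideanSpace ℝ (Fin n) → ℝ}
    (huconv : ∀ K ⊆ Ω, IsCompact K → TendstoUniformlyOn uk u atTop K)
    (hgconv : ∀ K ⊆ Ω, IsCompact K → TendstoUniformlyOn gk g atTop K)
    (hsub : ∀ k, PucciSubsol lam Lam Ω (uk k) (gk k)) :
    PucciSubsol lam Lam Ω u g := by
  intro x₀ hx₀ φ hφ hmax
  have main : ∀ ε : ℝ, 0 < ε →
      0 ≤ pucciMax lam Lam (hess φ x₀ + (2*ε) • (1 : Matrix (Fin n) (Fin n) ℝ)) + g x₀ := by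
    intro ε hε
    set ψ : EuclideanSpace ℝ (Fin n) → ℝ := fun x => φ x + ε * ⟪x - x₀, x - x₀⟫_ℝ with hψdef
    have hψ : ContDiff ℝ 2 ψ := psi_contDiff hφ ε x₀
    have hψx₀ : ψ x₀ = φ x₀ := by simp [hψdef]
    have hev : ∀ᶠ x in nhds x₀, (u x - φ x ≤ u x₀ - φ x₀) ∧ x ∈ Ω :=
      hmax.and (hΩ.mem_nhds hx₀)
    obtain ⟨r, hr0, hrsub⟩ := Metric.nhds_basis_closedBall.eventually_iff.mp hev
    set K := Metric.closedBall x₀ r with hKdef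
    have hK : IsCompact K := isCompact_closedBall x₀ r
    have hKΩ : K ⊆ Ω := fun x hx => (hrsub hx).2
    have hx₀K : x₀ ∈ K := Metric.mem_closedBall_self hr0.le
    have hstrict : ∀ x ∈ K, u x - ψ x ≤ (u x₀ - ψ x₀) - ε * ‖x - x₀‖^2 := by
      intro x hx
      have h1 := (hrsub hx).1
      have h2 : ψ x = φ x + ε * ‖x - x₀‖^2 := by
        show φ x + ε * ⟪x - x₀, x - x₀⟫_ℝ = _
        rw [real_inner_self_eq_norm_sq]
      rw [h2, hψx₀]; linarith
    have hexk : ∀ k, ∃ z ∈ K, IsMaxOn (fun x => uk k x - ψ x) K z := fun k =>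
      hK.exists_isMaxOn ⟨x₀, hx₀K⟩ (((huk k).mono hKΩ).sub hψ.continuous.continuousOn)
    choose xk hxkK hxkmax using hexk
    have hukc := huconv K hKΩ hK
    have hdist : ∀ η : ℝ, 0 < η → ∀ᶠ k in atTop, ε * ‖xk k - x₀‖^2 < 2*η := by
      intro η hη
      filter_upwards [Metric.tendstoUniformlyOn_iff.mp hukc η hη] with k hk
      have h1 : uk k x₀ - ψ x₀ ≤ uk k (xk k) - ψ (xk k) := hxkmax k hx₀K
      have h2 : u (xk k) - ψ (xk k) ≤ (u x₀ - ψ x₀) - ε * ‖xk k - x₀‖^2 :=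
        hstrict _ (hxkK k)
      have h3 : dist (u (xk k)) (uk k (xk k)) < η := hk _ (hxkK k)
      have h4 : dist (u x₀) (uk k x₀) < η := hk _ hx₀K
      rw [Real.dist_eq] at h3 h4
      have h3' := abs_lt.mp h3
      have h4' := abs_lt.mp h4
      linarith [h3'.1, h3'.2, h4'.1, h4'.2]
    have hxk : Tendsto xk atTop (nhds x₀) := by
      rw [Metric.tendsto_nhds]
      intro η hη
      filter_upwards [hdist (ε * η^2/2) (by positivity)] with k hk
      rw [dist_eq_norm]
      have hd2 : ‖xk k - x₀‖^2 < η^2 := by nlinarith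
      exact lt_of_pow_lt_pow_left₀ 2 hη.le hd2
    have hball : ∀ᶠ k in atTop, xk k ∈ Metric.ball x₀ r :=
      hxk (Metric.ball_mem_nhds x₀ hr0)
    have hin : ∀ᶠ k in atTop, 0 ≤ pucciMax lam Lam (hess ψ (xk k)) + gk k (xk k) := by
      filter_upwards [hball] with k hk
      have hKnhds : K ∈ nhds (xk k) :=
        Filter.mem_of_superset (Metric.isOpen_ball.mem_nhds hk) Metric.ball_subset_closedBall
      have hloc : IsLocalMax (fun x => uk k x - ψ x) (xk k) := (hxkmax k).isLocalMax hKnhds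
      exact hsub k (xk k) (hKΩ (Metric.ball_subset_closedBall hk)) ψ hψ hloc
    have hpt : Tendsto (fun k => pucciMax lam Lam (hess ψ (xk k))) atTop
        (nhds (pucciMax lam Lam (hess ψ x₀))) := pucci_hess_tendsto hl hL hψ hxk
    have hgK : ContinuousOn g K := (hgconv K hKΩ hK).continuousOn
      (Filter.Eventually.frequently (Filter.Eventually.of_forall fun k => (hgk k).mono hKΩ))
    have hgc : ContinuousAt g x₀ :=
      hgK.continuousAt (Metric.closedBall_mem_nhds x₀ hr0)
    have hg1 : Tendsto (fun k => g (xk k)) atTop (nhds (g x₀)) := hgc.tendsto.comp hxk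
    have hg0 : Tendsto (fun k => gk k (xk k) - g (xk k)) atTop (nhds 0) := by
      rw [NormedAddCommGroup.tendsto_nhds_zero]
      intro η hη
      filter_upwards [Metric.tendstoUniformlyOn_iff.mp (hgconv K hKΩ hK) η hη] with k hk
      have := hk _ (hxkK k)
      rw [Real.dist_eq, abs_sub_comm] at this
      rwa [Real.norm_eq_abs]
    have hg2 : Tendsto (fun k => gk k (xk k)) atTop (nhds (g x₀)) := by
      have := hg0.add hg1
      simpa using this
    have hfin := hpt.add hg2
    have := ge_of_tendsto hfin hin
    rwa [hess_psi hφ ε x₀ x₀] at this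
  have hgoal : ∀ δ : ℝ, 0 < δ → 0 ≤ pucciMax lam Lam (hess φ x₀) + g x₀ + δ := by
    intro δ hδ
    set C := Lam * n * Real.sqrt n with hC
    have hC0 : 0 ≤ C := by
      have hLam : 0 < Lam := lt_of_lt_of_le hl hL
      positivity
    set ε := δ / (4*C + 1) with hεdef
    have hε : 0 < ε := by positivity
    have h1 := main ε hε
    have hherm := hess_isHermitian hφ x₀
    have hherm2 : (hess φ x₀ + (2*ε) • (1 : Matrix (Fin n) (Fin n) ℝ)).IsHermitian :=
      hherm.add (herm_smul_one _)
    have hlip := pucci_lip hl hL hherm2 hherm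
    have hdiff : hess φ x₀ + (2*ε) • (1 : Matrix (Fin n) (Fin n) ℝ) - hess φ x₀
        = (2*ε) • (1 : Matrix (Fin n) (Fin n) ℝ) := add_sub_cancel_left _ _
    rw [hdiff, fro_smul_one _ (by positivity)] at hlip
    have h2 : Lam * n * (2*ε*Real.sqrt n) = 2*ε*C := by rw [hC]; ring
    rw [h2] at hlip
    have h3 : 2*ε*C ≤ δ := by
      rw [hεdef, show (2:ℝ) * (δ/(4*C+1)) * C = δ * (2*C) / (4*C+1) by ring,
        div_le_iff₀ (by positivity : (0:ℝ) < 4*C+1)]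
      nlinarith
    linarith
  linarith [le_of_forall_pos_le_add (fun δ hδ => by linarith [hgoal δ hδ] :
    ∀ δ : ℝ, 0 < δ → (0:ℝ) ≤ pucciMax lam Lam (hess φ x₀) + g x₀ + δ)]

open Filter in
lemma super_stable {n : ℕ} {lam Lam : ℝ} (hl : 0 < lam) (hL : lam ≤ Lam)
    {Ω : Set (EuclideanSpace ℝ (Fin n))} (hΩ : IsOpen Ω)
    {uk gk : ℕ → EuclideanSpace ℝ (Fin n) → ℝ}
    (huk : ∀ k, ContinuousOn (uk k) Ω) (hgk : ∀ k, ContinuousOn (gk k) Ω)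
    {u g : EuclideanSpace ℝ (Fin n) → ℝ}
    (huconv : ∀ K ⊆ Ω, IsCompact K → TendstoUniformlyOn uk u atTop K)
    (hgconv : ∀ K ⊆ Ω, IsCompact K → TendstoUniformlyOn gk g atTop K)
    (hsup : ∀ k, PucciSupersol lam Lam Ω (uk k) (gk k)) :
    PucciSupersol lam Lam Ω u g := by
  intro x₀ hx₀ φ hφ hmin
  have main : ∀ ε : ℝ, 0 < ε →
      pucciMax lam Lam (hess φ x₀ + (2*(-ε)) • (1 : Matrix (Fin n) (Fin n) ℝ)) + g x₀ ≤ 0 := by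
    intro ε hε
    set ψ : EuclideanSpace ℝ (Fin n) → ℝ := fun x => φ x + (-ε) * ⟪x - x₀, x - x₀⟫_ℝ with hψdef
    have hψ : ContDiff ℝ 2 ψ := psi_contDiff hφ (-ε) x₀
    have hψx₀ : ψ x₀ = φ x₀ := by simp [hψdef]
    have hev : ∀ᶠ x in nhds x₀, (u x₀ - φ x₀ ≤ u x - φ x) ∧ x ∈ Ω :=
      hmin.and (hΩ.mem_nhds hx₀)
    obtain ⟨r, hr0, hrsub⟩ := Metric.nhds_basis_closedBall.eventually_iff.mp hev
    set K := Metric.closedBall x₀ r with hKdef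
    have hK : IsCompact K := isCompact_closedBall x₀ r
    have hKΩ : K ⊆ Ω := fun x hx => (hrsub hx).2
    have hx₀K : x₀ ∈ K := Metric.mem_closedBall_self hr0.le
    have hstrict : ∀ x ∈ K, (u x₀ - ψ x₀) + ε * ‖x - x₀‖^2 ≤ u x - ψ x := by
      intro x hx
      have h1 := (hrsub hx).1
      have h2 : ψ x = φ x + (-ε) * ‖x - x₀‖^2 := by
        show φ x + (-ε) * ⟪x - x₀, x - x₀⟫_ℝ = _
        rw [real_inner_self_eq_norm_sq]
      rw [h2, hψx₀]; linarith
    have hexk : ∀ k, ∃ z ∈ K, IsMinOn (fun x => uk k x - ψ x) K z := fun k =>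
      hK.exists_isMinOn ⟨x₀, hx₀K⟩ (((huk k).mono hKΩ).sub hψ.continuous.continuousOn)
    choose xk hxkK hxkmin using hexk
    have hukc := huconv K hKΩ hK
    have hdist : ∀ η : ℝ, 0 < η → ∀ᶠ k in atTop, ε * ‖xk k - x₀‖^2 < 2*η := by
      intro η hη
      filter_upwards [Metric.tendstoUniformlyOn_iff.mp hukc η hη] with k hk
      have h1 : uk k (xk k) - ψ (xk k) ≤ uk k x₀ - ψ x₀ := hxkmin k hx₀K
      have h2 : (u x₀ - ψ x₀) + ε * ‖xk k - x₀‖^2 ≤ u (xk k) - ψ (xk k) :=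
        hstrict _ (hxkK k)
      have h3 : dist (u (xk k)) (uk k (xk k)) < η := hk _ (hxkK k)
      have h4 : dist (u x₀) (uk k x₀) < η := hk _ hx₀K
      rw [Real.dist_eq] at h3 h4
      have h3' := abs_lt.mp h3
      have h4' := abs_lt.mp h4
      linarith [h3'.1, h3'.2, h4'.1, h4'.2]
    have hxk : Tendsto xk atTop (nhds x₀) := by
      rw [Metric.tendsto_nhds]
      intro η hη
      filter_upwards [hdist (ε * η^2/2) (by positivity)] with k hk
      rw [dist_eq_norm]
      have hd2 : ‖xk k - x₀‖^2 < η^2 := by nlinarith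
      exact lt_of_pow_lt_pow_left₀ 2 hη.le hd2
    have hball : ∀ᶠ k in atTop, xk k ∈ Metric.ball x₀ r :=
      hxk (Metric.ball_mem_nhds x₀ hr0)
    have hin : ∀ᶠ k in atTop, pucciMax lam Lam (hess ψ (xk k)) + gk k (xk k) ≤ 0 := by
      filter_upwards [hball] with k hk
      have hKnhds : K ∈ nhds (xk k) :=
        Filter.mem_of_superset (Metric.isOpen_ball.mem_nhds hk) Metric.ball_subset_closedBall
      have hloc : IsLocalMin (fun x => uk k x - ψ x) (xk k) := (hxkmin k).isLocalMin hKnhds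
      exact hsup k (xk k) (hKΩ (Metric.ball_subset_closedBall hk)) ψ hψ hloc
    have hpt : Tendsto (fun k => pucciMax lam Lam (hess ψ (xk k))) atTop
        (nhds (pucciMax lam Lam (hess ψ x₀))) := pucci_hess_tendsto hl hL hψ hxk
    have hgK : ContinuousOn g K := (hgconv K hKΩ hK).continuousOn
      (Filter.Eventually.frequently (Filter.Eventually.of_forall fun k => (hgk k).mono hKΩ))
    have hgc : ContinuousAt g x₀ :=
      hgK.continuousAt (Metric.closedBall_mem_nhds x₀ hr0)
    have hg1 : Tendsto (fun k => g (xk k)) atTop (nhds (g x₀)) := hgc.tendsto.comp hxk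
    have hg0 : Tendsto (fun k => gk k (xk k) - g (xk k)) atTop (nhds 0) := by
      rw [NormedAddCommGroup.tendsto_nhds_zero]
      intro η hη
      filter_upwards [Metric.tendstoUniformlyOn_iff.mp (hgconv K hKΩ hK) η hη] with k hk
      have := hk _ (hxkK k)
      rw [Real.dist_eq, abs_sub_comm] at this
      rwa [Real.norm_eq_abs]
    have hg2 : Tendsto (fun k => gk k (xk k)) atTop (nhds (g x₀)) := by
      have := hg0.add hg1
      simpa using this
    have hfin := hpt.add hg2
    have := le_of_tendsto hfin hin
    rwa [hess_psi hφ (-ε) x₀ x₀] at this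
  have hgoal : ∀ δ : ℝ, 0 < δ → pucciMax lam Lam (hess φ x₀) + g x₀ ≤ δ := by
    intro δ hδ
    set C := Lam * n * Real.sqrt n with hC
    have hC0 : 0 ≤ C := by
      have hLam : 0 < Lam := lt_of_lt_of_le hl hL
      positivity
    set ε := δ / (4*C + 1) with hεdef
    have hε : 0 < ε := by positivity
    have h1 := main ε hε
    have hherm := hess_isHermitian hφ x₀
    have hherm2 : (hess φ x₀ + (2*(-ε)) • (1 : Matrix (Fin n) (Fin n) ℝ)).IsHermitian :=
      hherm.add (herm_smul_one _)
    have hlip := pucci_lip hl hL hherm hherm2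
    have hdiff : hess φ x₀ - (hess φ x₀ + (2*(-ε)) • (1 : Matrix (Fin n) (Fin n) ℝ))
        = (2*ε) • (1 : Matrix (Fin n) (Fin n) ℝ) := by
      ext i j
      simp only [Matrix.sub_apply, Matrix.add_apply, Matrix.smul_apply, smul_eq_mul]
      ring
    rw [hdiff, fro_smul_one _ (by positivity)] at hlip
    have h2 : Lam * n * (2*ε*Real.sqrt n) = 2*ε*C := by rw [hC]; ring
    rw [h2] at hlip
    have h3 : 2*ε*C ≤ δ := by
      rw [hεdef, show (2:ℝ) * (δ/(4*C+1)) * C = δ * (2*C) / (4*C+1) by ring,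
        div_le_iff₀ (by positivity : (0:ℝ) < 4*C+1)]
      nlinarith
    linarith
  linarith [le_of_forall_pos_le_add (fun δ hδ => by linarith [hgoal δ hδ] :
    ∀ δ : ℝ, 0 < δ → pucciMax lam Lam (hess φ x₀) + g x₀ ≤ 0 + δ)]


end Aux

open Filter in
theorem stmt12 (n : ℕ) (lam Lam : ℝ) (hlam : 0 < lam) (hLam : lam ≤ Lam)
    (Ω : Set (EuclideanSpace ℝ (Fin n))) (hΩ : IsOpen Ω)
    (uk gk : ℕ → EuclideanSpace ℝ (Fin n) → ℝ)
    (huk : ∀ k, ContinuousOn (uk k) Ω) (hgk : ∀ k, ContinuousOn (gk k) Ω)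
    (u g : EuclideanSpace ℝ (Fin n) → ℝ)
    (huconv : ∀ K ⊆ Ω, IsCompact K → TendstoUniformlyOn uk u atTop K)
    (hgconv : ∀ K ⊆ Ω, IsCompact K → TendstoUniformlyOn gk g atTop K) :
    ((∀ k, PucciSubsol lam Lam Ω (uk k) (gk k)) → PucciSubsol lam Lam Ω u g) ∧
    ((∀ k, PucciSupersol lam Lam Ω (uk k) (gk k)) → PucciSupersol lam Lam Ω u g) ∧
    ((∀ k, PucciSubsol lam Lam Ω (uk k) (gk k) ∧ PucciSupersol lam Lam Ω (uk k) (gk k)) →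
      PucciSubsol lam Lam Ω u g ∧ PucciSupersol lam Lam Ω u g) := by
  refine ⟨fun h => sub_stable hlam hLam hΩ huk hgk huconv hgconv h,
    fun h => super_stable hlam hLam hΩ huk hgk huconv hgconv h,
    fun h => ⟨sub_stable hlam hLam hΩ huk hgk huconv hgconv (fun k => (h k).1),
      super_stable hlam hLam hΩ huk hgk huconv hgconv (fun k => (h k).2)⟩⟩
end

section
/- (Doubling lemma) Let (X, d) be a complete metric space, let Σ ⊆ X be closed and ∅ ≠ D ⊆ Σ, and set Γ = Σ \ D. Let M : D → (0,∞) be bounded on compact subsets of D, and let k > 0. If y ∈ D satisfies M(y) · dist(y, Γ) > 2k, then there exists x ∈ D such that M(x) · dist(x, Γ) > 2k, M(x) ≥ M(y), and M(z) ≤ 2 M(x) for every z ∈ D with d(z, x) ≤ k / M(x). (Here dist(·, Γ) is interpreted as +∞ if Γ = ∅.) -/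
open EMetric Filter Topology

private lemma aux13 {Mx k : ℝ} (hMx : 0 < Mx) (a : ENNReal)
    (h : ENNReal.ofReal (2 * k) < ENNReal.ofReal Mx * a) :
    ENNReal.ofReal (2 * k / Mx) < a := by
  by_contra hle
  push_neg at hle
  apply absurd h
  push_neg
  calc ENNReal.ofReal Mx * a ≤ ENNReal.ofReal Mx * ENNReal.ofReal (2 * k / Mx) :=
        mul_le_mul_right hle _
    _ = ENNReal.ofReal (Mx * (2 * k / Mx)) := (ENNReal.ofReal_mul hMx.le).symm
    _ = ENNReal.ofReal (2 * k) := by rw [mul_div_cancel₀ _ hMx.ne']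

theorem stmt13 {X : Type*} [MetricSpace X] [CompleteSpace X]
    (S D : Set X) (hS : IsClosed S) (hD : D.Nonempty) (hDS : D ⊆ S)
    (M : X → ℝ) (hMpos : ∀ z ∈ D, 0 < M z)
    (hMbdd : ∀ K ⊆ D, IsCompact K → ∃ C : ℝ, ∀ z ∈ K, M z ≤ C)
    (k : ℝ) (hk : 0 < k)
    (y : X) (hy : y ∈ D)
    (hyfar : ENNReal.ofReal (2 * k) < ENNReal.ofReal (M y) * EMetric.infEdist y (S \ D)) :
    ∃ x ∈ D, ENNReal.ofReal (2 * k) < ENNReal.ofReal (M x) * EMetric.infEdist x (S \ D) ∧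
      M y ≤ M x ∧ ∀ z ∈ D, dist z x ≤ k / M x → M z ≤ 2 * M x := by
  by_contra hcon
  push_neg at hcon
  set Γ := S \ D with hΓ
  have hMy : 0 < M y := hMpos y hy
  set Q : X → Prop := fun x => x ∈ D ∧ M y ≤ M x ∧
      ENNReal.ofReal (2 * k) < ENNReal.ofReal (M x) * EMetric.infEdist x Γ with hQ
  have key : ∀ x, Q x → ∃ z, Q z ∧ dist z x ≤ k / M x ∧ 2 * M x < M z := by
    rintro x ⟨hxD, hxy, hxfar⟩
    have hMx : 0 < M x := hMpos x hxD
    obtain ⟨z, hzD, hzd, hzM⟩ := hcon x hxD hxfar hxy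
    have hMz : 0 < M z := hMpos z hzD
    refine ⟨z, ⟨hzD, ?_, ?_⟩, hzd, hzM⟩
    · linarith
    · -- far condition for z
      have h1 : ENNReal.ofReal (2 * k / M x) < infEdist x Γ := aux13 hMx _ hxfar
      have h2 : infEdist x Γ ≤ infEdist z Γ + ENNReal.ofReal (k / M x) := by
        refine (infEdist_le_infEdist_add_edist).trans (add_le_add_right ?_ _)
        rw [edist_comm, edist_dist]
        exact ENNReal.ofReal_le_ofReal hzd
      have h3 : ENNReal.ofReal (k / M x) < infEdist z Γ := by
        have : ENNReal.ofReal (k / M x) + ENNReal.ofReal (k / M x) <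
            infEdist z Γ + ENNReal.ofReal (k / M x) := by
          refine lt_of_le_of_lt ?_ (h1.trans_le h2)
          rw [← ENNReal.ofReal_add (by positivity) (by positivity)]
          apply ENNReal.ofReal_le_ofReal
          ring_nf
          rfl
        exact lt_of_add_lt_add_right this
      calc ENNReal.ofReal (2 * k) = ENNReal.ofReal (2 * M x * (k / M x)) := by
            congr 1
            field_simp
        _ = ENNReal.ofReal (2 * M x) * ENNReal.ofReal (k / M x) := by
            rw [ENNReal.ofReal_mul (by positivity)]
        _ < ENNReal.ofReal (M z) * infEdist z Γ :=
            ENNReal.mul_lt_mul (ENNReal.ofReal_lt_ofReal_iff hMz |>.mpr hzM) h3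
  choose! f hfQ hfd hfM using key
  set u : ℕ → X := fun n => f^[n] y with hu
  have hu0 : u 0 = y := rfl
  have husucc : ∀ n, u (n + 1) = f (u n) := fun n => Function.iterate_succ_apply' f n y
  have hQy : Q y := ⟨hy, le_refl _, hyfar⟩
  have hQu : ∀ n, Q (u n) := by
    intro n
    induction n with
    | zero => exact hQy
    | succ n ih => rw [husucc]; exact hfQ _ ih
  have hgrow : ∀ n, 2 ^ n * M y ≤ M (u n) := by
    intro n
    induction n with
    | zero => rw [pow_zero, one_mul, hu0]
    | succ n ih =>
        rw [husucc]
        have := hfM _ (hQu n)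
        calc 2 ^ (n + 1) * M y = 2 * (2 ^ n * M y) := by ring
          _ ≤ 2 * M (u n) := by linarith
          _ ≤ M (f (u n)) := this.le
  have hdist : ∀ n, dist (u n) (u (n + 1)) ≤ (k / M y) * (1 / 2) ^ n := by
    intro n
    have hMun : 0 < M (u n) := hMpos _ (hQu n).1
    have h1 : dist (u n) (u (n + 1)) ≤ k / M (u n) := by
      rw [dist_comm, husucc]; exact hfd _ (hQu n)
    have h2 : k / M (u n) ≤ k / (2 ^ n * M y) := by
      apply div_le_div_of_nonneg_left hk.le (by positivity) (hgrow n)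
    refine h1.trans (h2.trans ?_)
    rw [div_pow, one_pow, div_mul_div_comm, mul_one]
    rw [mul_comm (2 ^ n) (M y)]
  have hcauchy : CauchySeq u := cauchySeq_of_le_geometric (1 / 2) (k / M y) (by norm_num) hdist
  obtain ⟨a, ha⟩ := cauchySeq_tendsto_of_complete hcauchy
  have hdya : dist y a ≤ 2 * k / M y := by
    have := dist_le_of_le_geometric_of_tendsto₀ (1 / 2) (k / M y) (by norm_num) hdist ha
    rw [hu0] at this
    refine this.trans_eq ?_
    field_simp
    ring
  have haS : a ∈ S := hS.mem_of_tendsto ha (Eventually.of_forall fun n => hDS (hQu n).1)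
  have haD : a ∈ D := by
    by_contra haD
    have haΓ : a ∈ Γ := ⟨haS, haD⟩
    have h1 : ENNReal.ofReal (2 * k / M y) < infEdist y Γ := aux13 hMy _ hyfar
    have h2 : infEdist y Γ ≤ ENNReal.ofReal (2 * k / M y) := by
      refine (infEdist_le_edist_of_mem haΓ).trans ?_
      rw [edist_dist]
      exact ENNReal.ofReal_le_ofReal hdya
    exact absurd h2 h1.not_ge
  have hK : IsCompact (insert a (Set.range u)) := ha.isCompact_insert_range
  have hKD : insert a (Set.range u) ⊆ D := by
    rintro x (rfl | ⟨n, rfl⟩)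
    · exact haD
    · exact (hQu n).1
  obtain ⟨C, hC⟩ := hMbdd _ hKD hK
  obtain ⟨n, hn⟩ := pow_unbounded_of_one_lt (C / M y) (one_lt_two (α := ℝ))
  have : C < 2 ^ n * M y := (div_lt_iff₀ hMy).mp hn
  have := hC (u n) (Set.mem_insert_of_mem _ ⟨n, rfl⟩)
  linarith [hgrow n]
end

section
/- (Doubling lemma, closed-set version) Let (X, d) be a complete metric space, let D ⊆ X be closed and nonempty, let M : D → (0,∞) be bounded on compact subsets of D, and let k > 0. Then for every y ∈ D there exists x ∈ D such that M(x) ≥ M(y) and M(z) ≤ 2 M(x) for every z ∈ D with d(z, x) ≤ k / M(x). -/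
theorem stmt14 {X : Type*} [MetricSpace X] [CompleteSpace X]
    (D : Set X) (hD : IsClosed D) (hDne : D.Nonempty)
    (M : X → ℝ) (hMpos : ∀ z ∈ D, 0 < M z)
    (hMbdd : ∀ K ⊆ D, IsCompact K → ∃ C : ℝ, ∀ z ∈ K, M z ≤ C)
    (k : ℝ) (hk : 0 < k) :
    ∀ y ∈ D, ∃ x ∈ D, M y ≤ M x ∧ ∀ z ∈ D, dist z x ≤ k / M x → M z ≤ 2 * M x := by
  intro y hy
  by_contra hcon
  push_neg at hcon
  choose! g hgD hgdist hglt using hcon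
  set u : ℕ → X := fun n => g^[n] y with hu
  have hMy : 0 < M y := hMpos y hy
  have husucc : ∀ n, u (n + 1) = g (u n) := by
    intro n; simp [hu, Function.iterate_succ_apply']
  have key : ∀ n, u n ∈ D ∧ 2 ^ n * M y ≤ M (u n) := by
    intro n
    induction n with
    | zero => exact ⟨by simpa [hu] using hy, by simp [hu]⟩
    | succ n ih =>
      have hle : M y ≤ M (u n) := by
        calc M y = 1 * M y := (one_mul _).symm
        _ ≤ 2 ^ n * M y := by gcongr; exact one_le_pow₀ one_le_two
        _ ≤ M (u n) := ih.2
      have hlt := hglt (u n) ih.1 hle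
      have hD' := hgD (u n) ih.1 hle
      rw [husucc]
      refine ⟨hD', ?_⟩
      have : 2 ^ (n + 1) * M y = 2 * (2 ^ n * M y) := by ring
      rw [this]
      nlinarith [ih.2, hMpos (u n) ih.1]
  have hMylow : ∀ n, M y ≤ M (u n) := by
    intro n
    calc M y = 1 * M y := (one_mul _).symm
    _ ≤ 2 ^ n * M y := by gcongr; exact one_le_pow₀ one_le_two
    _ ≤ M (u n) := (key n).2
  have hdist : ∀ n, dist (u n) (u (n + 1)) ≤ (k / M y) * (1 / 2) ^ n := by
    intro n
    have h1 : dist (u (n + 1)) (u n) ≤ k / M (u n) := by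
      rw [husucc]; exact hgdist (u n) (key n).1 (hMylow n)
    have h2 : k / M (u n) ≤ k / (2 ^ n * M y) :=
      div_le_div_of_nonneg_left hk.le (by positivity) (key n).2
    have h3 : k / (2 ^ n * M y) = (k / M y) * (1 / 2) ^ n := by
      rw [div_pow, one_pow]
      rw [div_mul_div_comm, mul_one]
      congr 1
      ring
    rw [dist_comm]
    calc dist (u (n + 1)) (u n) ≤ k / M (u n) := h1
    _ ≤ k / (2 ^ n * M y) := h2
    _ = (k / M y) * (1 / 2) ^ n := h3
  have hcauchy : CauchySeq u :=
    cauchySeq_of_le_geometric (1 / 2) (k / M y) (by norm_num) hdist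
  obtain ⟨x, hx⟩ := cauchySeq_tendsto_of_complete hcauchy
  have hxD : x ∈ D := hD.mem_of_tendsto hx (Filter.Eventually.of_forall fun n => (key n).1)
  have hK : IsCompact (insert x (Set.range u)) := hx.isCompact_insert_range
  have hKD : insert x (Set.range u) ⊆ D := by
    rintro z (rfl | ⟨n, rfl⟩)
    · exact hxD
    · exact (key n).1
  obtain ⟨C, hC⟩ := hMbdd _ hKD hK
  obtain ⟨n, hn⟩ := pow_unbounded_of_one_lt (C / M y) (by norm_num : (1:ℝ) < 2)
  have h1 : M (u n) ≤ C := hC _ (Set.mem_insert_of_mem _ ⟨n, rfl⟩)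
  have h2 : 2 ^ n * M y ≤ C := le_trans (key n).2 h1
  have : C / M y < 2 ^ n := hn
  rw [div_lt_iff₀ hMy] at this
  linarith
end
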